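/- Let ψ be an unambiguous DNF over variables x₁,…,xₙ. Construct ψ^∨ by: replacing each occurrence of xᵢ by ⋁ⱼ yᵢⱼ (over m fresh variables per original variable), expanding by distributivity into a DNF, and strengthening each term by adding, for each positive literal yᵢⱼ in it, the negative literals ¬yᵢⱼ' for all j' ≠ j. Then ψ^∨ is an unambiguous DNF. -/
import Mathlib


/-- Satisfaction of a term of the original DNF `ψ`, given by positive/negative literal
indicators `pos, neg : Fin n → Bool`, by an assignment `β` to `x₁,…,xₙ`. -/
def satPsiTerm {n : ℕ} (pos neg : Fin n → Bool) (β : Fin n → Bool) : Prop :=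
  (∀ i, pos i = true → β i = true) ∧ (∀ i, neg i = true → β i = false)

/-- Satisfaction of a term of the copy-construction DNF `ψ^∨`: the term derived from the
original term `(pos, neg)` by the choice `j` of one copy per positive variable. The
variables are the copies `yᵢⱼ`, i.e. pairs in `Fin n × Fin m`. For each positive `i` the
chosen copy `yᵢ,ⱼᵢ` must be true and all other copies `yᵢⱼ'` false; for each negative `i`
all copies are false. -/
def satCopyTerm {n m : ℕ} (pos neg : Fin n → Bool) (j : Fin n → Fin m)
    (α : Fin n × Fin m → Bool) : Prop :=
  (∀ i, pos i = true →
      α (i, j i) = true ∧ ∀ j' : Fin m, j' ≠ j i → α (i, j') = false) ∧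
  (∀ i, neg i = true → ∀ j' : Fin m, α (i, j') = false)

/-- If `ψ` is an unambiguous DNF over `x₁,…,xₙ`, then the DNF `ψ^∨`
obtained by substituting `⋁ⱼ yᵢⱼ` for `xᵢ`, expanding by distributivity and
strengthening each term with the negative literals `¬yᵢⱼ'` (`j' ≠ j`) for each positive
literal `yᵢⱼ`, is again unambiguous: any assignment `α` satisfies at most one term of
`ψ^∨` (terms of `ψ^∨` being determined by the originating term and the choice of copies
on its positive positions). -/
theorem copy_construction_unambiguous
    (n m ℓ : ℕ) (pos neg : Fin ℓ → Fin n → Bool)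
    (hunamb : ∀ (β : Fin n → Bool) (t₁ t₂ : Fin ℓ),
      satPsiTerm (pos t₁) (neg t₁) β → satPsiTerm (pos t₂) (neg t₂) β → t₁ = t₂) :
    ∀ (α : Fin n × Fin m → Bool) (t₁ t₂ : Fin ℓ) (j₁ j₂ : Fin n → Fin m),
      satCopyTerm (pos t₁) (neg t₁) j₁ α → satCopyTerm (pos t₂) (neg t₂) j₂ α →
      t₁ = t₂ ∧ ∀ i, pos t₁ i = true → j₁ i = j₂ i := by
  intro α t₁ t₂ j₁ j₂ h₁ h₂
  set β : Fin n → Bool := fun i => decide (∃ j, α (i, j) = true) with hβ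
  have hsat : ∀ (t : Fin ℓ) (j : Fin n → Fin m), satCopyTerm (pos t) (neg t) j α →
      satPsiTerm (pos t) (neg t) β := by
    intro t j h
    constructor
    · intro i hi
      simp only [hβ, decide_eq_true_eq]
      exact ⟨j i, (h.1 i hi).1⟩
    · intro i hi
      simp only [hβ, decide_eq_false_iff_not]
      rintro ⟨j', hj'⟩
      exact absurd (h.2 i hi j') (by simp [hj'])
  have ht : t₁ = t₂ := hunamb β t₁ t₂ (hsat t₁ j₁ h₁) (hsat t₂ j₂ h₂)
  refine ⟨ht, fun i hi => ?_⟩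
  by_contra hne
  have h1 : α (i, j₁ i) = true := (h₁.1 i hi).1
  have h2 : α (i, j₁ i) = false := (h₂.1 i (ht ▸ hi)).2 (j₁ i) hne
  simp [h1] at h2
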